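/- Let n ≥ 1, let φ : [0,∞) → [0,∞) be an increasing, convex, non-constant function, and let μ be the probability measure on ℝⁿ with density x ↦ e^{-φ(|x|)} with respect to Lebesgue measure. Let K ⊂ ℝⁿ be a convex symmetric body and R > 0, and suppose there exists t₀ > 0 such that μ(tR·B₂ⁿ) ≤ μ(tK) for all t ≥ t₀. Then R·B₂ⁿ ⊆ K. -/

import Mathlib

open MeasureTheory Filter Set Pointwise
open scoped ENNReal

lemma slope_aux {φ : ℝ → ℝ} (hconv : ConvexOn ℝ (Set.Ici 0) φ) {s₀ s₁ p q : ℝ}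
    (h0 : 0 ≤ s₀) (h01 : s₀ < s₁) (h1p : s₁ ≤ p) (hpq : p ≤ q) :
    φ p + (φ s₁ - φ s₀) / (s₁ - s₀) * (q - p) ≤ φ q := by
  rcases eq_or_lt_of_le hpq with rfl | hpq
  · simp
  have hs₁ : (0:ℝ) ≤ s₁ := le_of_lt (lt_of_le_of_lt h0 h01)
  have hp : (0:ℝ) ≤ p := le_trans hs₁ h1p
  have hq : (0:ℝ) ≤ q := le_trans hp hpq.le
  have m1 : (φ s₁ - φ s₀) / (s₁ - s₀) ≤ (φ p - φ s₀) / (p - s₀) :=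
    hconv.secant_mono h0 hs₁ hp (ne_of_gt h01) (ne_of_gt (lt_of_lt_of_le h01 h1p)) h1p
  have m2' : (φ s₀ - φ p) / (s₀ - p) ≤ (φ q - φ p) / (q - p) :=
    hconv.secant_mono hp h0 hq (ne_of_lt (lt_of_lt_of_le h01 h1p)) (ne_of_gt hpq)
      (le_trans (le_of_lt h01) (le_trans h1p hpq.le))
  have m2 : (φ p - φ s₀) / (p - s₀) ≤ (φ q - φ p) / (q - p) := by
    have : (φ s₀ - φ p) / (s₀ - p) = (φ p - φ s₀) / (p - s₀) := by
      rw [← neg_div_neg_eq]; ring_nf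
    linarith [m2']
  have key : (φ s₁ - φ s₀) / (s₁ - s₀) ≤ (φ q - φ p) / (q - p) := le_trans m1 m2
  have hqp : (0:ℝ) < q - p := sub_pos.2 hpq
  nlinarith [(le_div_iff₀ hqp).1 key]

lemma exp_lint_fin (n : ℕ) {a : ℝ} (ha : 0 < a) :
    (∫⁻ y : EuclideanSpace ℝ (Fin n), ENNReal.ofReal (Real.exp (-(a * ‖y‖)))) < ∞ := by
  set r : ℝ := ((n + 1 : ℕ) : ℝ) with hr
  have hnr : (Module.finrank ℝ (EuclideanSpace ℝ (Fin n)) : ℝ) < r := by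
    rw [finrank_euclideanSpace_fin, hr]
    exact_mod_cast Nat.lt_succ_self n
  set C : ℝ := Real.exp a * (n + 1).factorial / a ^ (n + 1) with hCdef
  have hC : 0 ≤ C := by positivity
  have hbound : ∀ y : EuclideanSpace ℝ (Fin n),
      Real.exp (-(a * ‖y‖)) ≤ C * (1 + ‖y‖) ^ (-r) := by
    intro y
    set s : ℝ := ‖y‖ with hs
    have hs0 : (0:ℝ) ≤ s := norm_nonneg _
    have h1 : (0:ℝ) < 1 + s := by positivity
    have hA : (0:ℝ) < a ^ (n+1) := by positivity
    have hB : (0:ℝ) < (1 + s) ^ (n+1) := by positivity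
    have hF : (0:ℝ) < ((n+1).factorial : ℝ) := by positivity
    have hX : (0:ℝ) < Real.exp (a * s) := Real.exp_pos _
    have hpow : (a * (1 + s)) ^ (n+1) / (n+1).factorial ≤ Real.exp (a * (1 + s)) :=
      Real.pow_div_factorial_le_exp _ (by positivity) _
    have hexp : Real.exp (a * (1 + s)) = Real.exp a * Real.exp (a * s) := by
      rw [← Real.exp_add]; ring_nf
    have hmul : (a * (1+s)) ^ (n+1) = a ^ (n+1) * (1+s) ^ (n+1) := mul_pow _ _ _
    have hgoal : a ^ (n+1) * (1+s) ^ (n+1) ≤ Real.exp a * (n+1).factorial * Real.exp (a * s) := by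
      rw [hexp, hmul] at hpow
      have := (div_le_iff₀ hF).1 hpow
      nlinarith [this]
    have hrpow : (1 + s) ^ (-r) = ((1 + s) ^ (n+1) : ℝ)⁻¹ := by
      rw [hr, Real.rpow_neg h1.le, Real.rpow_natCast]
    rw [hrpow, ← div_eq_mul_inv, le_div_iff₀ hB]
    rw [le_div_iff₀ hA, Real.exp_neg]
    calc (Real.exp (a * s))⁻¹ * (1+s)^(n+1) * a^(n+1)
        = (a^(n+1) * (1+s)^(n+1)) * (Real.exp (a*s))⁻¹ := by ring
      _ ≤ (Real.exp a * (n+1).factorial * Real.exp (a*s)) * (Real.exp (a*s))⁻¹ := by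
          exact mul_le_mul_of_nonneg_right hgoal (by positivity)
      _ = Real.exp a * (n+1).factorial := by field_simp
  calc (∫⁻ y : EuclideanSpace ℝ (Fin n), ENNReal.ofReal (Real.exp (-(a * ‖y‖))))
      ≤ ∫⁻ y : EuclideanSpace ℝ (Fin n), ENNReal.ofReal (C * (1 + ‖y‖) ^ (-r)) :=
        lintegral_mono fun y => ENNReal.ofReal_le_ofReal (hbound y)
    _ = ∫⁻ y : EuclideanSpace ℝ (Fin n),
          ENNReal.ofReal C * ENNReal.ofReal ((1 + ‖y‖) ^ (-r)) := by
        simp_rw [ENNReal.ofReal_mul hC]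
    _ = ENNReal.ofReal C * ∫⁻ y : EuclideanSpace ℝ (Fin n),
          ENNReal.ofReal ((1 + ‖y‖) ^ (-r)) := lintegral_const_mul' _ _ ENNReal.ofReal_ne_top
    _ < ∞ := ENNReal.mul_lt_top ENNReal.ofReal_lt_top (finite_integral_one_add_norm hnr)

set_option maxHeartbeats 1000000 in
theorem stmt0 (n : ℕ) (hn : 1 ≤ n)
    (φ : ℝ → ℝ)
    (hmono : MonotoneOn φ (Set.Ici 0))
    (hconv : ConvexOn ℝ (Set.Ici 0) φ)
    (hnonneg : ∀ t ∈ Set.Ici (0 : ℝ), 0 ≤ φ t)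
    (hnc : ∃ s t : ℝ, 0 ≤ s ∧ 0 ≤ t ∧ φ s ≠ φ t)
    (μ : Measure (EuclideanSpace ℝ (Fin n)))
    (hμ : μ = volume.withDensity fun x => ENNReal.ofReal (Real.exp (-φ ‖x‖)))
    (hprob : IsProbabilityMeasure μ)
    (K : Set (EuclideanSpace ℝ (Fin n)))
    (hKcomp : IsCompact K) (hKconv : Convex ℝ K)
    (hKint : (interior K).Nonempty) (hKsymm : K = -K)
    (R : ℝ) (hR : 0 < R)
    (t₀ : ℝ) (ht₀ : 0 < t₀)
    (h : ∀ t ≥ t₀, μ (Metric.closedBall (0 : EuclideanSpace ℝ (Fin n)) (t * R)) ≤ μ (t • K)) :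
    Metric.closedBall (0 : EuclideanSpace ℝ (Fin n)) R ⊆ K := by
  haveI := hprob
  intro x hx
  rw [Metric.mem_closedBall, dist_zero_right] at hx
  by_contra hxK
  obtain ⟨f, u, hfK, hfx⟩ := geometric_hahn_banach_closed_point hKconv hKcomp.isClosed hxK
  -- 0 ∈ K and u > 0
  obtain ⟨k, hk⟩ := hKint
  have hkK : k ∈ K := interior_subset hk
  have hnegk : -k ∈ K := by rw [hKsymm]; exact Set.neg_mem_neg.2 hkK
  have h0K : (0 : EuclideanSpace ℝ (Fin n)) ∈ K := by
    have := hKconv hkK hnegk (by norm_num : (0:ℝ) ≤ 1/2) (by norm_num : (0:ℝ) ≤ 1/2)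
      (by norm_num : (1:ℝ)/2 + 1/2 = 1)
    simpa using this
  have hu : 0 < u := by simpa using hfK 0 h0K
  have hfx0 : 0 < f x := lt_trans hu hfx
  -- geometric constants
  set θ : ℝ := (u + f x) / (2 * f x) with hθ
  have hθ0 : 0 < θ := by positivity
  have hθ1 : θ < 1 := by rw [hθ, div_lt_one (by positivity)]; linarith
  set c' : ℝ := (1 + θ) / 2 * R with hc'
  have hc'0 : 0 < c' := by positivity
  have hc'R : c' < R := by rw [hc']; nlinarith
  have hθRc' : θ * R < c' := by rw [hc']; nlinarith
  -- the open set A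
  set A : Set (EuclideanSpace ℝ (Fin n)) := f ⁻¹' (Set.Ioi u) ∩ Metric.ball 0 c' with hA
  have hAopen : IsOpen A := (isOpen_Ioi.preimage f.continuous).inter Metric.isOpen_ball
  have hy₀ : θ • x ∈ A := by
    constructor
    · show u < f (θ • x)
      rw [_root_.map_smul, smul_eq_mul]
      have : θ * f x = (u + f x) / 2 := by rw [hθ]; field_simp
      rw [this]; linarith
    · rw [Metric.mem_ball, dist_zero_right, norm_smul, Real.norm_eq_abs, abs_of_pos hθ0]
      calc θ * ‖x‖ ≤ θ * R := by nlinarith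
        _ < c' := hθRc'
  have hvolA : 0 < volume A := hAopen.measure_pos volume ⟨_, hy₀⟩
  -- density as a measurable function
  set ψ : ℝ → ℝ := fun r => φ (max r 0) with hψ
  have hψmono : Monotone ψ := fun a b hab =>
    hmono (Set.mem_Ici.2 (le_max_right _ _)) (Set.mem_Ici.2 (le_max_right _ _)) (max_le_max hab le_rfl)
  set g : EuclideanSpace ℝ (Fin n) → ℝ≥0∞ :=
    fun y => ENNReal.ofReal (Real.exp (-ψ ‖y‖)) with hg
  have hψφ : ∀ y : EuclideanSpace ℝ (Fin n), ψ ‖y‖ = φ ‖y‖ := fun y => by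
    rw [hψ]; simp [max_eq_left (norm_nonneg y)]
  have hgmeas : Measurable g :=
    ENNReal.measurable_ofReal.comp
      (Real.measurable_exp.comp ((hψmono.measurable.comp measurable_norm).neg))
  have hμg : μ = volume.withDensity g := by
    rw [hμ]; congr 1; funext y
    show ENNReal.ofReal (Real.exp (-φ ‖y‖)) = ENNReal.ofReal (Real.exp (-ψ ‖y‖))
    rw [hψφ y]
  -- slope constants
  obtain ⟨s₀, s₁, hs₀, hs01, hφ01⟩ : ∃ s₀ s₁ : ℝ, 0 ≤ s₀ ∧ s₀ < s₁ ∧ φ s₀ < φ s₁ := by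
    obtain ⟨sa, sb, hsa, hsb, hsne⟩ := hnc
    rcases lt_trichotomy sa sb with hab | hab | hab
    · refine ⟨sa, sb, hsa, hab, ?_⟩
      rcases lt_or_eq_of_le (hmono hsa hsb hab.le) with h' | h'
      exacts [h', absurd h' hsne]
    · exact absurd (congrArg φ hab) hsne
    · refine ⟨sb, sa, hsb, hab, ?_⟩
      rcases lt_or_eq_of_le (hmono hsb hsa hab.le) with h' | h'
      exacts [h', absurd h'.symm hsne]
  set m : ℝ := (φ s₁ - φ s₀) / (s₁ - s₀) with hm
  have hm0 : 0 < m := div_pos (sub_pos.2 hφ01) (sub_pos.2 hs01)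
  set σ : ℝ := (R - c') / (2 * R) with hσ
  have hRc' : 0 < R - c' := sub_pos.2 hc'R
  have hσ0 : 0 < σ := div_pos hRc' (by positivity)
  have hσ1 : σ < 1 := by rw [hσ, div_lt_one (by positivity)]; nlinarith
  set δ : ℝ := m * (R - c') / 2 with hδ
  have hδ0 : 0 < δ := by positivity
  set S := ∫⁻ y : EuclideanSpace ℝ (Fin n),
    ENNReal.ofReal (Real.exp (-(σ * m * ‖y‖))) with hSdef
  have hSfin : S < ∞ := exp_lint_fin n (by positivity)
  -- choice of t
  set L : ℝ≥0∞ := ENNReal.ofReal (t₀ ^ n) * volume A + ENNReal.ofReal (t₀ ^ n) * volume A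
    with hL
  have hL0 : 0 < L := by
    have h1 : (0:ℝ≥0∞) < ENNReal.ofReal (t₀ ^ n) * volume A :=
      ENNReal.mul_pos (by simp [ENNReal.ofReal_pos, pow_pos ht₀]) hvolA.ne'
    calc (0:ℝ≥0∞) < ENNReal.ofReal (t₀ ^ n) * volume A := h1
      _ ≤ L := le_add_self
  have htend : Tendsto (fun t : ℝ => ENNReal.ofReal (Real.exp (-(δ * t))) * S) atTop (nhds 0) := by
    have h1 : Tendsto (fun t : ℝ => -(δ * t)) atTop atBot :=
      tendsto_neg_atTop_atBot.comp (Tendsto.const_mul_atTop hδ0 tendsto_id)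
    have h2 : Tendsto (fun t : ℝ => Real.exp (-(δ * t))) atTop (nhds 0) :=
      Real.tendsto_exp_atBot.comp h1
    have h3 := ENNReal.Tendsto.mul_const (ENNReal.tendsto_ofReal h2) (b := S) (Or.inr hSfin.ne)
    simpa using h3
  obtain ⟨t, htt₀, hts₁div, htlt⟩ :=
    ((eventually_ge_atTop t₀).and ((eventually_ge_atTop (s₁ / c')).and
      (htend.eventually_lt_const hL0))).exists
  have ht0 : 0 < t := lt_of_lt_of_le ht₀ htt₀
  have hts₁ : s₁ ≤ t * c' := by
    rw [div_le_iff₀ hc'0] at hts₁div; linarith [hts₁div]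
  set Ball := Metric.closedBall (0 : EuclideanSpace ℝ (Fin n)) (t * R) with hBall
  set H : Set (EuclideanSpace ℝ (Fin n)) := f ⁻¹' (Set.Ioi (t * u)) with hH
  set Slab : Set (EuclideanSpace ℝ (Fin n)) := f ⁻¹' (Set.Icc (-(t*u)) (t*u)) with hSlab
  have hHmeas : MeasurableSet H := measurableSet_Ioi.preimage f.continuous.measurable
  have hSlabmeas : MeasurableSet Slab := measurableSet_Icc.preimage f.continuous.measurable
  have hBallmeas : MeasurableSet Ball := measurableSet_closedBall
  have hKslab : t • K ⊆ Slab := by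
    rintro y ⟨k', hk'K, rfl⟩
    have h1 : f k' < u := hfK k' hk'K
    have h2 : -u < f k' := by
      have h3 := hfK (-k') (by rw [hKsymm]; exact Set.neg_mem_neg.2 hk'K)
      rw [map_neg] at h3; linarith
    show f (t • k') ∈ Set.Icc (-(t*u)) (t*u)
    have h4 : f (t • k') = t * f k' := by rw [_root_.map_smul, smul_eq_mul]
    rw [h4, Set.mem_Icc]
    constructor <;> nlinarith
  have hμneg : μ (f ⁻¹' (Set.Iio (-(t * u)))) = μ H := by
    have hset : f ⁻¹' (Set.Iio (-(t * u))) = Neg.neg ⁻¹' H := by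
      ext y
      simp only [hH, Set.mem_preimage, Set.mem_Iio, Set.mem_Ioi, map_neg]
      constructor <;> intro h' <;> linarith
    rw [hset, hμg, withDensity_apply _ (hHmeas.preimage measurable_neg),
      withDensity_apply _ hHmeas]
    rw [← (Measure.measurePreserving_neg
      (volume : Measure (EuclideanSpace ℝ (Fin n)))).setLIntegral_comp_preimage_emb
      measurableEmbedding_neg g H]
    refine lintegral_congr fun y => ?_
    show ENNReal.ofReal (Real.exp (-ψ ‖y‖)) = ENNReal.ofReal (Real.exp (-ψ ‖-y‖))
    rw [norm_neg]
  have hchain : μ Ball ≤ μ Slab := le_trans (h t htt₀) (measure_mono hKslab)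
  have hslab_compl : Slabᶜ = f ⁻¹' (Set.Iio (-(t*u))) ∪ H := by
    ext y
    simp only [hSlab, hH, Set.mem_compl_iff, Set.mem_preimage, Set.mem_Icc, Set.mem_union,
      Set.mem_Iio, Set.mem_Ioi, not_and_or, not_le]
  have hdisj : Disjoint (f ⁻¹' (Set.Iio (-(t*u)))) H := by
    rw [Set.disjoint_left]
    intro y h1 h2
    simp only [hH, Set.mem_preimage, Set.mem_Iio, Set.mem_Ioi] at h1 h2
    have : 0 < t * u := mul_pos ht0 hu
    linarith
  have h2H : μ H + μ H ≤ μ Ballᶜ := by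
    have e1 : μ Ball + μ Ballᶜ = 1 := by
      rw [measure_add_measure_compl hBallmeas, measure_univ]
    have e2 : μ Slab + μ Slabᶜ = 1 := by
      rw [measure_add_measure_compl hSlabmeas, measure_univ]
    have e3 : μ Slab + μ Slabᶜ ≤ μ Slab + μ Ballᶜ := by
      rw [e2, ← e1]; exact add_le_add_left hchain _
    have e4 : μ Slabᶜ ≤ μ Ballᶜ := (ENNReal.add_le_add_iff_left (measure_ne_top μ Slab)).1 e3
    calc μ H + μ H = μ (f ⁻¹' (Set.Iio (-(t*u)))) + μ H := by rw [hμneg]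
      _ = μ Slabᶜ := by rw [hslab_compl, measure_union hdisj hHmeas]
      _ ≤ μ Ballᶜ := e4
  have htA : t • A ⊆ H := by
    rintro y ⟨a, haA, rfl⟩
    have h1 : u < f a := haA.1
    show t * u < f (t • a)
    rw [_root_.map_smul, smul_eq_mul]
    exact (mul_lt_mul_iff_right₀ ht0).2 h1
  have htAnorm : ∀ y ∈ t • A, ‖y‖ ≤ t * c' := by
    rintro y ⟨a, haA, rfl⟩
    have h2 : ‖a‖ < c' := by
      have h3 := haA.2; rwa [Metric.mem_ball, dist_zero_right] at h3
    rw [norm_smul, Real.norm_eq_abs, abs_of_pos ht0]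
    nlinarith
  have htAmeas : MeasurableSet (t • A) := (hAopen.smul₀ (ne_of_gt ht0)).measurableSet
  have htc'0 : (0:ℝ) ≤ t * c' := by positivity
  have hlow : ENNReal.ofReal (Real.exp (-φ (t * c'))) * (ENNReal.ofReal (t₀ ^ n) * volume A)
      ≤ μ H := by
    have hstep1 : ENNReal.ofReal (t₀ ^ n) * volume A ≤ volume (t • A) := by
      rw [Measure.addHaar_smul_of_nonneg volume ht0.le, finrank_euclideanSpace_fin]
      exact mul_le_mul_left (ENNReal.ofReal_le_ofReal (pow_le_pow_left₀ ht₀.le htt₀ n)) _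
    calc ENNReal.ofReal (Real.exp (-φ (t * c'))) * (ENNReal.ofReal (t₀ ^ n) * volume A)
        ≤ ENNReal.ofReal (Real.exp (-φ (t * c'))) * volume (t • A) :=
          mul_le_mul_right hstep1 _
      _ = ∫⁻ _ in t • A, ENNReal.ofReal (Real.exp (-φ (t * c'))) ∂volume :=
          (setLIntegral_const _ _).symm
      _ ≤ ∫⁻ y in t • A, g y ∂volume := by
          refine setLIntegral_mono hgmeas fun y hy => ?_
          show ENNReal.ofReal (Real.exp (-φ (t*c'))) ≤ ENNReal.ofReal (Real.exp (-ψ ‖y‖))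
          rw [hψφ y]
          exact ENNReal.ofReal_le_ofReal (Real.exp_le_exp.2 (neg_le_neg
            (hmono (Set.mem_Ici.2 (norm_nonneg y)) (Set.mem_Ici.2 htc'0) (htAnorm y hy))))
      _ = μ (t • A) := by rw [hμg, withDensity_apply _ htAmeas]
      _ ≤ μ H := measure_mono htA
  have hBallc : ∀ y : EuclideanSpace ℝ (Fin n), y ∈ Ballᶜ ↔ t * R < ‖y‖ := by
    intro y
    rw [hBall]
    simp [Metric.mem_closedBall, dist_zero_right, not_le]
  have hc'le : t * c' ≤ t * R := by nlinarith
  have hup : μ Ballᶜ ≤ ENNReal.ofReal (Real.exp (-φ (t * c'))) *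
      (ENNReal.ofReal (Real.exp (-(δ * t))) * S) := by
    have hδeq : σ * m * (t * c') - (1 - σ) * m * (t * R - t * c') = -(δ * t) := by
      rw [hδ, hσ]; field_simp; ring
    have hpt : ∀ y ∈ Ballᶜ, g y ≤ ENNReal.ofReal (Real.exp (-φ (t * c'))) *
        (ENNReal.ofReal (Real.exp (-(δ * t))) * ENNReal.ofReal (Real.exp (-(σ * m * ‖y‖)))) := by
      intro y hy
      have hyR : t * R < ‖y‖ := (hBallc y).1 hy
      have h1 : t * c' ≤ ‖y‖ := le_trans hc'le hyR.le
      have hslope : φ (t * c') + m * (‖y‖ - t * c') ≤ φ ‖y‖ :=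
        slope_aux hconv hs₀ hs01 hts₁ h1
      have hsplit : -φ ‖y‖ ≤ -φ (t * c') + (-(δ * t)) + (-(σ * m * ‖y‖)) := by
        nlinarith [hslope, mul_pos (mul_pos (sub_pos.2 hσ1) hm0) (sub_pos.2 hyR), hδeq]
      calc g y = ENNReal.ofReal (Real.exp (-φ ‖y‖)) := by
            show ENNReal.ofReal (Real.exp (-ψ ‖y‖)) = _
            rw [hψφ y]
        _ ≤ ENNReal.ofReal (Real.exp (-φ (t*c') + (-(δ*t)) + (-(σ*m*‖y‖)))) :=
            ENNReal.ofReal_le_ofReal (Real.exp_le_exp.2 hsplit)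
        _ = _ := by
            rw [Real.exp_add, Real.exp_add, ENNReal.ofReal_mul (by positivity),
              ENNReal.ofReal_mul (by positivity), mul_assoc]
    rw [hμg, withDensity_apply _ hBallmeas.compl]
    have hmb : Measurable fun y : EuclideanSpace ℝ (Fin n) =>
        ENNReal.ofReal (Real.exp (-(σ * m * ‖y‖))) :=
      ENNReal.measurable_ofReal.comp
        (Real.measurable_exp.comp ((measurable_norm.const_mul (σ*m)).neg))
    calc ∫⁻ y in Ballᶜ, g y ∂volume
        ≤ ∫⁻ y in Ballᶜ, ENNReal.ofReal (Real.exp (-φ (t * c'))) *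
            (ENNReal.ofReal (Real.exp (-(δ * t))) *
              ENNReal.ofReal (Real.exp (-(σ * m * ‖y‖)))) ∂volume :=
          setLIntegral_mono ((hmb.const_mul _).const_mul _) hpt
      _ ≤ ∫⁻ y, ENNReal.ofReal (Real.exp (-φ (t * c'))) *
            (ENNReal.ofReal (Real.exp (-(δ * t))) *
              ENNReal.ofReal (Real.exp (-(σ * m * ‖y‖)))) ∂volume :=
          setLIntegral_le_lintegral _ _
      _ = ENNReal.ofReal (Real.exp (-φ (t * c'))) *
            (ENNReal.ofReal (Real.exp (-(δ * t))) * S) := by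
          rw [lintegral_const_mul' _ _ ENNReal.ofReal_ne_top]
          congr 1
          rw [lintegral_const_mul' _ _ ENNReal.ofReal_ne_top]
  have hfinal := le_trans (add_le_add hlow hlow) (le_trans h2H hup)
  rw [← mul_add] at hfinal
  have hL' : L ≤ ENNReal.ofReal (Real.exp (-(δ * t))) * S :=
    (ENNReal.mul_le_mul_iff_right (ENNReal.ofReal_pos.2 (Real.exp_pos _)).ne'
      ENNReal.ofReal_ne_top).1 hfinal
  exact absurd hL' (not_le.2 htlt)
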